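/- Let m ≥ 2 and let U be a 2m×2m complex unitary matrix that is antisymmetric, i.e., Uᵀ = −U. Then for every rank-1 Hermitian projection P in the 2m×2m complex matrices, the matrix I − P − U Pᵀ U* is a Hermitian projection of rank 2m − 2. Consequently the Breuer–Hall map Φ_BH(X) = (1/(2(m−1)))·((tr X)·I − X − U Xᵀ U*) maps every rank-1 Hermitian projection to 1/(2(m−1)) times a rank-(2m−2) Hermitian projection, and in particular Φ_BH is not injective as a linear map. -/

import Mathlib

open Matrix

noncomputable section

lemma trace_idem {n : Type*} [Fintype n] [DecidableEq n]
    (A : Matrix n n ℂ) (h : A * A = A) : A.trace = (A.rank : ℂ) := by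
  have hf : A.mulVecLin ∘ₗ A.mulVecLin = A.mulVecLin := by
    rw [← Matrix.mulVecLin_mul, h]
  have hp : LinearMap.IsProj (LinearMap.range A.mulVecLin) A.mulVecLin := by
    constructor
    · intro x; exact LinearMap.mem_range_self _ x
    · rintro x ⟨y, rfl⟩
      exact DFunLike.congr_fun hf y
  have ht := hp.trace
  rw [Matrix.rank, ← ht, LinearMap.trace_eq_matrix_trace ℂ (Pi.basisFun ℂ n),
    LinearMap.toMatrix_eq_toMatrix', ← Matrix.toLin'_apply' A, LinearMap.toMatrix'_toLin']

lemma skew_rank_le_one {n : Type*} [Fintype n] [DecidableEq n]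
    (A : Matrix n n ℂ) (hskew : Aᵀ = -A) (hr : A.rank ≤ 1) : A = 0 := by
  by_contra hA
  obtain ⟨i, j, hij⟩ : ∃ i j, A i j ≠ 0 := by
    by_contra h; push_neg at h; exact hA (by ext i j; exact h i j)
  have hdiag : ∀ k, A k k = 0 := by
    intro k
    have h1 : A k k = -A k k := by
      have := congrFun (congrFun hskew k) k
      simpa [Matrix.transpose_apply] using this
    linear_combination h1 / 2
  have hji : A j i = -A i j := by
    have := congrFun (congrFun hskew i) j
    simpa [Matrix.transpose_apply] using this
  set x : n → ℂ := fun k => A k i with hx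
  set y : n → ℂ := fun k => A k j with hy
  have hli : LinearIndependent ℂ ![x, y] := by
    rw [LinearIndependent.pair_iff]
    intro s t hst
    have hj' := congrFun hst j
    have hi' := congrFun hst i
    simp [hx, hy, hdiag, hji] at hj' hi'
    constructor
    · rcases hj' with h | h
      · exact h
      · exact absurd h hij
    · rcases hi' with h | h
      · exact h
      · exact absurd h hij
  have h2 : Module.finrank ℂ (Submodule.span ℂ (Set.range ![x, y])) = 2 := by
    rw [finrank_span_eq_card hli]
    simp
  have hle : Submodule.span ℂ (Set.range ![x, y]) ≤ Submodule.span ℂ (Set.range Aᵀ) := by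
    apply Submodule.span_mono
    rintro z ⟨k, rfl⟩
    fin_cases k
    · exact ⟨i, rfl⟩
    · exact ⟨j, rfl⟩
  have := Submodule.finrank_mono hle
  rw [h2] at this
  change 2 ≤ Module.finrank ℂ (Submodule.span ℂ (Set.range A.col)) at this
  rw [← Matrix.rank_eq_finrank_span_cols] at this
  omega
theorem stmt_9 (m : ℕ) (hm : 2 ≤ m)
    (U : Matrix (Fin (2 * m)) (Fin (2 * m)) ℂ)
    (hU : U ∈ Matrix.unitaryGroup (Fin (2 * m)) ℂ)
    (hUanti : Uᵀ = -U) :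
    (∀ P : Matrix (Fin (2 * m)) (Fin (2 * m)) ℂ,
      P.IsHermitian → P * P = P → P.rank = 1 →
        (1 - P - U * Pᵀ * Uᴴ).IsHermitian ∧
        (1 - P - U * Pᵀ * Uᴴ) * (1 - P - U * Pᵀ * Uᴴ) = 1 - P - U * Pᵀ * Uᴴ ∧
        (1 - P - U * Pᵀ * Uᴴ).rank = 2 * m - 2) ∧
    (∀ P : Matrix (Fin (2 * m)) (Fin (2 * m)) ℂ,
      P.IsHermitian → P * P = P → P.rank = 1 →
        ∃ Q : Matrix (Fin (2 * m)) (Fin (2 * m)) ℂ,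
          Q.IsHermitian ∧ Q * Q = Q ∧ Q.rank = 2 * m - 2 ∧
          (1 / (2 * ((m : ℂ) - 1))) • (P.trace • (1 : Matrix (Fin (2 * m)) (Fin (2 * m)) ℂ)
              - P - U * Pᵀ * Uᴴ)
            = (1 / (2 * ((m : ℂ) - 1))) • Q) ∧
    ¬ Function.Injective (fun X : Matrix (Fin (2 * m)) (Fin (2 * m)) ℂ =>
        (1 / (2 * ((m : ℂ) - 1))) • (X.trace • (1 : Matrix (Fin (2 * m)) (Fin (2 * m)) ℂ)
          - X - U * Xᵀ * Uᴴ)) := by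
  have hUU : U * Uᴴ = 1 := by
    have := Matrix.mem_unitaryGroup_iff.mp hU
    simpa [Matrix.star_eq_conjTranspose] using this
  have hU'U : Uᴴ * U = 1 := by
    have := Matrix.mem_unitaryGroup_iff'.mp hU
    simpa [Matrix.star_eq_conjTranspose] using this
  have hcm : ∀ A : Matrix (Fin (2 * m)) (Fin (2 * m)) ℂ, Aᵀᴴ = Aᴴᵀ := by
    intro A; ext i j; simp
  -- key orthogonality
  have hkey : ∀ P : Matrix (Fin (2 * m)) (Fin (2 * m)) ℂ,
      P * P = P → P.rank = 1 → P * (U * Pᵀ * Uᴴ) = 0 := by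
    intro P hP2 hPr
    have hA0 : P * U * Pᵀ = 0 := by
      apply skew_rank_le_one
      · rw [Matrix.transpose_mul, Matrix.transpose_mul, Matrix.transpose_transpose, hUanti]
        simp [mul_assoc]
      · calc (P * U * Pᵀ).rank ≤ (P * U).rank := Matrix.rank_mul_le_left _ _
          _ ≤ P.rank := Matrix.rank_mul_le_left _ _
          _ = 1 := hPr
    calc P * (U * Pᵀ * Uᴴ) = (P * U * Pᵀ) * Uᴴ := by simp [mul_assoc]
      _ = 0 := by rw [hA0, zero_mul]
  -- main projection facts
  have main : ∀ P : Matrix (Fin (2 * m)) (Fin (2 * m)) ℂ,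
      P.IsHermitian → P * P = P → P.rank = 1 →
        (1 - P - U * Pᵀ * Uᴴ).IsHermitian ∧
        (1 - P - U * Pᵀ * Uᴴ) * (1 - P - U * Pᵀ * Uᴴ) = 1 - P - U * Pᵀ * Uᴴ ∧
        (1 - P - U * Pᵀ * Uᴴ).rank = 2 * m - 2 := by
    intro P hPH hP2 hPr
    set Q := U * Pᵀ * Uᴴ with hQ
    have hPt : Pᵀᴴ = Pᵀ := by rw [hcm, hPH.eq]
    have hPt2 : Pᵀ * Pᵀ = Pᵀ := by rw [← Matrix.transpose_mul, hP2]
    have hQH : Q.IsHermitian := by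
      unfold Q
      rw [Matrix.IsHermitian, Matrix.conjTranspose_mul, Matrix.conjTranspose_mul,
        Matrix.conjTranspose_conjTranspose, hPt, mul_assoc]
    have hQ2 : Q * Q = Q := by
      unfold Q
      calc (U * Pᵀ * Uᴴ) * (U * Pᵀ * Uᴴ) = U * (Pᵀ * ((Uᴴ * U) * (Pᵀ * Uᴴ))) := by
            simp [mul_assoc]
        _ = U * Pᵀ * Uᴴ := by rw [hU'U, one_mul, ← mul_assoc Pᵀ Pᵀ, hPt2]; simp [mul_assoc]
    have hPQ : P * Q = 0 := hkey P hP2 hPr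
    have hQP : Q * P = 0 := by
      have := congrArg Matrix.conjTranspose hPQ
      rwa [Matrix.conjTranspose_mul, hQH.eq, hPH.eq, Matrix.conjTranspose_zero] at this
    have hRH : (1 - P - Q).IsHermitian := by
      rw [Matrix.IsHermitian, Matrix.conjTranspose_sub, Matrix.conjTranspose_sub,
        Matrix.conjTranspose_one, hPH.eq, hQH.eq]
    have hR2 : (1 - P - Q) * (1 - P - Q) = 1 - P - Q := by
      simp only [sub_mul, mul_sub, one_mul, mul_one, hP2, hQ2, hPQ, hQP, sub_zero, sub_self]
    refine ⟨hRH, hR2, ?_⟩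
    have htrP : P.trace = 1 := by rw [trace_idem P hP2, hPr]; norm_num
    have htrQ : Q.trace = 1 := by
      unfold Q
      rw [Matrix.trace_mul_cycle, hU'U, one_mul, Matrix.trace_transpose, htrP]
    have htrR : (1 - P - Q).trace = (2 * m : ℂ) - 2 := by
      rw [Matrix.trace_sub, Matrix.trace_sub, Matrix.trace_one, htrP, htrQ, Fintype.card_fin]
      push_cast
      ring
    have hc : (((1 - P - Q).rank : ℕ) : ℂ) = ((2 * m - 2 : ℕ) : ℂ) := by
      rw [← trace_idem _ hR2, htrR]
      have h2m : 2 ≤ 2 * m := by omega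
      push_cast [Nat.cast_sub h2m]
      ring
    exact_mod_cast hc
  refine ⟨main, ?_, ?_⟩
  · intro P hPH hP2 hPr
    obtain ⟨h1, h2, h3⟩ := main P hPH hP2 hPr
    refine ⟨1 - P - U * Pᵀ * Uᴴ, h1, h2, h3, ?_⟩
    have htrP : P.trace = 1 := by rw [trace_idem P hP2, hPr]; norm_num
    rw [htrP, one_smul]
  · intro hinj
    have : NeZero (2 * m) := ⟨by omega⟩
    set P : Matrix (Fin (2 * m)) (Fin (2 * m)) ℂ :=
      Matrix.single (0 : Fin (2 * m)) 0 1 with hPdef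
    have hP2 : P * P = P := by
      unfold P
      rw [Matrix.single_mul_single_same, mul_one]
    have htrP : P.trace = 1 := by unfold P; rw [Matrix.trace_single_eq_same]
    have hPr : P.rank = 1 := by
      have := trace_idem P hP2
      rw [htrP] at this
      exact_mod_cast this.symm
    set P' : Matrix (Fin (2 * m)) (Fin (2 * m)) ℂ := U * Pᵀ * Uᴴ with hP'def
    -- U * P'ᵀ * Uᴴ = P
    have hconj : Uᴴᵀ = -Uᴴ := by
      rw [← hcm]
      have := congrArg Matrix.conjTranspose hUanti
      rwa [Matrix.conjTranspose_neg] at this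
    have hback : U * P'ᵀ * Uᴴ = P := by
      unfold P'
      rw [Matrix.transpose_mul, Matrix.transpose_mul, Matrix.transpose_transpose, hconj, hUanti]
      calc U * (-Uᴴ * (P * -U)) * Uᴴ = (U * Uᴴ) * P * (U * Uᴴ) := by
            simp only [Matrix.neg_mul, Matrix.mul_neg, neg_neg]
            simp [mul_assoc]
        _ = P := by rw [hUU, one_mul, mul_one]
    have htrP' : P'.trace = 1 := by
      unfold P'
      rw [Matrix.trace_mul_cycle, hU'U, one_mul, Matrix.trace_transpose, htrP]
    have heq : P = P' := by
      apply hinj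
      simp only [htrP, htrP', hback, hP'def]
      rw [← hP'def, htrP', hback]
      congr 1
      ring_nf
      abel
    have hPP' : P * P' = 0 := hkey P hP2 hPr
    rw [← heq, hP2] at hPP'
    have : (1 : ℂ) = 0 := by
      have := congrFun (congrFun hPP' 0) 0
      simpa [hPdef, Matrix.single_apply_same] using this
    norm_num at this
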